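/- Let (A₁, X₂, A₂, Y) be random variables with covariance matrix Σ = [[1, ρ_AX, ρ_AX ρ_XA, 0], [ρ_AX, 1, ρ_XA, ρ_UX], [ρ_AX ρ_XA, ρ_XA, 1, ρ_XA ρ_UX], [0, ρ_UX, ρ_XA ρ_UX, 1]] (in the order A₁, X₂, A₂, Y), where Σ is positive definite and |ρ_AX| < 1. Then the population least-squares regression coefficients of Y on (A₁, X₂, A₂), i.e. the minimizer β of E(Y − β₁A₁ − β₂X₂ − β₃A₂)², satisfies β = Σ_{(A₁,X₂,A₂)}⁻¹ Cov((A₁,X₂,A₂), Y) = (−ρ_AX ρ_UX/(1−ρ_AX²), ρ_UX/(1−ρ_AX²), 0). -/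

import Mathlib

open Matrix

/-- In the two-period Gaussian linear example with covariance matrix Σ
(order A₁, X₂, A₂, Y) parameterized by ρ_AX, ρ_XA, ρ_UX, the population regression
coefficient vector of Y on (A₁, X₂, A₂), namely Σ_Z⁻¹ Cov(Z, Y), equals
(−ρ_AX ρ_UX/(1−ρ_AX²), ρ_UX/(1−ρ_AX²), 0). -/
theorem stmt0 (ρAX ρXA ρUX : ℝ)
    (Sig : Matrix (Fin 4) (Fin 4) ℝ)
    (hSig : Sig = !![1, ρAX, ρAX * ρXA, 0;
                 ρAX, 1, ρXA, ρUX;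
                 ρAX * ρXA, ρXA, 1, ρXA * ρUX;
                 0, ρUX, ρXA * ρUX, 1])
    (hpd : Sig.PosDef)
    (hρ : |ρAX| < 1)
    (SigZ : Matrix (Fin 3) (Fin 3) ℝ)
    (hSigZ : SigZ = Sig.submatrix Fin.castSucc Fin.castSucc)
    (c : Fin 3 → ℝ)
    (hc : c = fun i => Sig (Fin.castSucc i) 3) :
    SigZ⁻¹ *ᵥ c = ![-(ρAX * ρUX) / (1 - ρAX ^ 2), ρUX / (1 - ρAX ^ 2), 0] := by
  have ha : (1 : ℝ) - ρAX ^ 2 ≠ 0 := by nlinarith [abs_nonneg ρAX, sq_abs ρAX, hρ]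
  -- ρXA² < 1 from positive definiteness
  have hb : (0:ℝ) < 1 - ρXA ^ 2 := by
    have hx : (![0, 1, -ρXA, 0] : Fin 4 → ℝ) ≠ 0 := by
      intro h
      have := congrFun h 1
      simp at this
    have := hpd.dotProduct_mulVec_pos hx
    subst hSig
    simp [mulVec, dotProduct, Fin.sum_univ_four] at this
    nlinarith [this]
  have hSigZ' : SigZ = !![1, ρAX, ρAX * ρXA; ρAX, 1, ρXA; ρAX * ρXA, ρXA, 1] := by
    subst hSig hSigZ
    ext i j
    fin_cases i <;> fin_cases j <;> rfl
  have hdet : SigZ.det ≠ 0 := by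
    have : SigZ.det = (1 - ρAX ^ 2) * (1 - ρXA ^ 2) := by
      rw [hSigZ', Matrix.det_fin_three]
      simp
      ring
    rw [this]
    exact mul_ne_zero ha (ne_of_gt hb)
  set v : Fin 3 → ℝ := ![-(ρAX * ρUX) / (1 - ρAX ^ 2), ρUX / (1 - ρAX ^ 2), 0] with hv
  have hc' : c = ![0, ρUX, ρXA * ρUX] := by
    subst hc hSig
    ext i
    fin_cases i <;> rfl
  have hmv : SigZ *ᵥ v = c := by
    rw [hSigZ', hc']
    ext i
    fin_cases i <;>
      simp [hv, mulVec, dotProduct, Fin.sum_univ_three] <;> field_simp <;> ring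
  have hinv : SigZ⁻¹ * SigZ = 1 := Matrix.nonsing_inv_mul _ (isUnit_iff_ne_zero.2 hdet)
  calc SigZ⁻¹ *ᵥ c = SigZ⁻¹ *ᵥ (SigZ *ᵥ v) := by rw [hmv]
    _ = (SigZ⁻¹ * SigZ) *ᵥ v := mulVec_mulVec _ _ _
    _ = v := by rw [hinv, one_mulVec]
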